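/- For every integer r ≥ 0, the maximal x-coordinate among points (x, x+r) with d_pc(O,(x,x+r)) = r is x = r(r-1)/2, and the maximal x-coordinate among points (x, x-r) with d_pc(O,(x,x-r)) = r is x = r(r+1)/2. -/

import Mathlib

def Lp : ℤ × ℤ → ℤ × ℤ := fun p => (-p.1 + 2*p.2 + 1, p.2)
def Lpp : ℤ × ℤ → ℤ × ℤ := fun p => (p.1, 2*p.1 - p.2 + 1)
def Mr : ℤ × ℤ → ℤ × ℤ := fun p => (p.1 + 1, p.2)
def Ml : ℤ × ℤ → ℤ × ℤ := fun p => (p.1 - 1, p.2)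
def Mu : ℤ × ℤ → ℤ × ℤ := fun p => (p.1, p.2 + 1)
def Md : ℤ × ℤ → ℤ × ℤ := fun p => (p.1, p.2 - 1)

def ops : Set ((ℤ × ℤ) → (ℤ × ℤ)) := {Lp, Lpp, Mr, Ml, Mu, Md}

/-- The parabolic-taxicab distance: minimal number of operators from `ops`
needed to map `P` to `Q`. -/
noncomputable def dpc (P Q : ℤ × ℤ) : ℕ :=
  sInf {n | ∃ l : List ((ℤ × ℤ) → (ℤ × ℤ)), l.length = n ∧ (∀ f ∈ l, f ∈ ops) ∧
    l.foldr (fun f p => f p) P = Q}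

lemma mem_ops_cases (f : (ℤ × ℤ) → (ℤ × ℤ)) (h : f ∈ ops) :
    f = Lp ∨ f = Lpp ∨ f = Mr ∨ f = Ml ∨ f = Mu ∨ f = Md := by
  simpa [ops] using h

lemma invariant : ∀ l : List ((ℤ × ℤ) → (ℤ × ℤ)), (∀ f ∈ l, f ∈ ops) →
    ∀ x y : ℤ, l.foldr (fun f p => f p) (0, 0) = (x, y) →
    |y - x| ≤ (l.length : ℤ) ∧
      4 * x ≤ (l.length : ℤ)^2 + (y - x)^2 - 2*(y - x) := by
  intro l
  induction l with
  | nil =>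
    intro _ x y h
    simp only [List.foldr_nil, Prod.mk.injEq] at h
    obtain ⟨rfl, rfl⟩ := h
    norm_num
  | cons f t ih =>
    intro hmem x y h
    obtain ⟨u, v, huv⟩ : ∃ u v, t.foldr (fun f p => f p) (0, 0) = (u, v) := ⟨_, _, rfl⟩
    obtain ⟨h1, h2⟩ := ih (fun g hg => hmem g (List.mem_cons_of_mem _ hg)) u v huv
    have hfx : f (u, v) = (x, y) := by
      rw [List.foldr_cons, huv] at h; exact h
    rw [abs_le] at h1
    have hn : (0:ℤ) ≤ t.length := Int.natCast_nonneg _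
    have hll : (((f :: t).length : ℕ) : ℤ) = (t.length : ℤ) + 1 := by
      push_cast [List.length_cons]; ring
    rw [hll]
    rcases mem_ops_cases f (hmem f List.mem_cons_self) with rfl|rfl|rfl|rfl|rfl|rfl <;>
    · simp only [Lp, Lpp, Mr, Ml, Mu, Md, Prod.mk.injEq] at hfx
      obtain ⟨rfl, rfl⟩ := hfx
      constructor
      · rw [abs_le]; constructor <;> linarith [h1.1, h1.2]
      · nlinarith [h1.1, h1.2, h2]

def repA : ℕ → List ((ℤ × ℤ) → (ℤ × ℤ))
  | 0 => []
  | m+1 => Lpp :: Lp :: repA m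

def repB : ℕ → List ((ℤ × ℤ) → (ℤ × ℤ))
  | 0 => []
  | m+1 => Lp :: Lpp :: repB m

lemma repA_length (m : ℕ) : (repA m).length = 2*m := by
  induction m with
  | zero => simp [repA]
  | succ k ih => simp [repA, ih]; omega

lemma repB_length (m : ℕ) : (repB m).length = 2*m := by
  induction m with
  | zero => simp [repB]
  | succ k ih => simp [repB, ih]; omega

lemma repA_mem (m : ℕ) : ∀ f ∈ repA m, f ∈ ops := by
  induction m with
  | zero => intro f hf; simp [repA] at hf
  | succ k ih =>
    intro f hf
    simp only [repA, repB, List.mem_cons] at hf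
    rcases hf with rfl | rfl | h
    · simp [ops]
    · simp [ops]
    · exact ih f h

lemma repB_mem (m : ℕ) : ∀ f ∈ repB m, f ∈ ops := by
  induction m with
  | zero => intro f hf; simp [repB] at hf
  | succ k ih =>
    intro f hf
    simp only [repA, repB, List.mem_cons] at hf
    rcases hf with rfl | rfl | h
    · simp [ops]
    · simp [ops]
    · exact ih f h

lemma repA_fold (m : ℕ) :
    (repA m).foldr (fun f p => f p) (0, 0) = ((m:ℤ)*(2*(m:ℤ)-1), (m:ℤ)*(2*(m:ℤ)+1)) := by
  induction m with
  | zero => simp [repA]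
  | succ k ih =>
    show Lpp (Lp ((repA k).foldr (fun f p => f p) (0, 0))) = _
    rw [ih]
    simp only [Lp, Lpp, Prod.mk.injEq]
    push_cast
    constructor <;> ring

lemma repB_fold (m : ℕ) :
    (repB m).foldr (fun f p => f p) (0, 0) = ((m:ℤ)*(2*(m:ℤ)+1), (m:ℤ)*(2*(m:ℤ)-1)) := by
  induction m with
  | zero => simp [repB]
  | succ k ih =>
    show Lp (Lpp ((repB k).foldr (fun f p => f p) (0, 0))) = _
    rw [ih]
    simp only [Lp, Lpp, Prod.mk.injEq]
    push_cast
    constructor <;> ring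

lemma fold_rep_Mr (k : ℕ) (p : ℤ × ℤ) :
    (List.replicate k Mr).foldr (fun f p => f p) p = (p.1 + k, p.2) := by
  induction k with
  | zero => simp
  | succ n ih =>
    rw [List.replicate_succ, List.foldr_cons, ih]
    simp only [Mr] 
    simp only [Prod.mk.injEq]
    constructor <;> first | trivial | (push_cast; ring)

lemma fold_rep_Ml (k : ℕ) (p : ℤ × ℤ) :
    (List.replicate k Ml).foldr (fun f p => f p) p = (p.1 - k, p.2) := by
  induction k with
  | zero => simp
  | succ n ih =>
    rw [List.replicate_succ, List.foldr_cons, ih]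
    simp only [Ml] 
    simp only [Prod.mk.injEq]
    constructor <;> first | trivial | (push_cast; ring)

lemma fold_rep_Mu (k : ℕ) (p : ℤ × ℤ) :
    (List.replicate k Mu).foldr (fun f p => f p) p = (p.1, p.2 + k) := by
  induction k with
  | zero => simp
  | succ n ih =>
    rw [List.replicate_succ, List.foldr_cons, ih]
    simp only [Mu] 
    simp only [Prod.mk.injEq]
    constructor <;> first | trivial | (push_cast; ring)

lemma fold_rep_Md (k : ℕ) (p : ℤ × ℤ) :
    (List.replicate k Md).foldr (fun f p => f p) p = (p.1, p.2 - k) := by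
  induction k with
  | zero => simp
  | succ n ih =>
    rw [List.replicate_succ, List.foldr_cons, ih]
    simp only [Md] 
    simp only [Prod.mk.injEq]
    constructor <;> first | trivial | (push_cast; ring)

lemma exists_reach (x y : ℤ) : ∃ l : List ((ℤ × ℤ) → (ℤ × ℤ)),
    (∀ f ∈ l, f ∈ ops) ∧ l.foldr (fun f p => f p) (0, 0) = (x, y) := by
  rcases le_total 0 x with hx | hx <;> rcases le_total 0 y with hy | hy
  · refine ⟨List.replicate y.toNat Mu ++ List.replicate x.toNat Mr, ?_, ?_⟩
    · intro f hf
      rcases List.mem_append.mp hf with h | h <;> rw [List.eq_of_mem_replicate h] <;> simp [ops]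
    · rw [List.foldr_append, fold_rep_Mr, fold_rep_Mu]
      simp only [Prod.mk.injEq]
      constructor <;> omega
  · refine ⟨List.replicate (-y).toNat Md ++ List.replicate x.toNat Mr, ?_, ?_⟩
    · intro f hf
      rcases List.mem_append.mp hf with h | h <;> rw [List.eq_of_mem_replicate h] <;> simp [ops]
    · rw [List.foldr_append, fold_rep_Mr, fold_rep_Md]
      simp only [Prod.mk.injEq]
      constructor <;> omega
  · refine ⟨List.replicate y.toNat Mu ++ List.replicate (-x).toNat Ml, ?_, ?_⟩
    · intro f hf
      rcases List.mem_append.mp hf with h | h <;> rw [List.eq_of_mem_replicate h] <;> simp [ops]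
    · rw [List.foldr_append, fold_rep_Ml, fold_rep_Mu]
      simp only [Prod.mk.injEq]
      constructor <;> omega
  · refine ⟨List.replicate (-y).toNat Md ++ List.replicate (-x).toNat Ml, ?_, ?_⟩
    · intro f hf
      rcases List.mem_append.mp hf with h | h <;> rw [List.eq_of_mem_replicate h] <;> simp [ops]
    · rw [List.foldr_append, fold_rep_Ml, fold_rep_Md]
      simp only [Prod.mk.injEq]
      constructor <;> omega

lemma dpc_spec (x y : ℤ) : ∃ l : List ((ℤ × ℤ) → (ℤ × ℤ)),
    l.length = dpc (0, 0) (x, y) ∧ (∀ f ∈ l, f ∈ ops) ∧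
    l.foldr (fun f p => f p) (0, 0) = (x, y) := by
  have hne : {n | ∃ l : List ((ℤ × ℤ) → (ℤ × ℤ)), l.length = n ∧ (∀ f ∈ l, f ∈ ops) ∧
      l.foldr (fun f p => f p) ((0:ℤ), (0:ℤ)) = (x, y)}.Nonempty := by
    obtain ⟨l, h1, h2⟩ := exists_reach x y
    exact ⟨l.length, l, rfl, h1, h2⟩
  exact Nat.sInf_mem hne

lemma dpc_le (x y : ℤ) (l : List ((ℤ × ℤ) → (ℤ × ℤ))) (hmem : ∀ f ∈ l, f ∈ ops)
    (hfold : l.foldr (fun f p => f p) (0, 0) = (x, y)) : dpc (0, 0) (x, y) ≤ l.length :=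
  Nat.sInf_le ⟨l, rfl, hmem, hfold⟩

lemma dpc_eq_of (x y : ℤ) (r : ℕ) (habs : |y - x| = (r : ℤ))
    (l : List ((ℤ × ℤ) → (ℤ × ℤ))) (hlen : l.length = r) (hmem : ∀ f ∈ l, f ∈ ops)
    (hfold : l.foldr (fun f p => f p) (0, 0) = (x, y)) : dpc (0, 0) (x, y) = r := by
  refine le_antisymm (hlen ▸ dpc_le x y l hmem hfold) ?_
  obtain ⟨l', hl1, hl2, hl3⟩ := dpc_spec x y
  have h := (invariant l' hl2 x y hl3).1
  rw [habs, hl1] at h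
  exact_mod_cast h

lemma dpc_bound (x y : ℤ) :
    4 * x ≤ (dpc (0, 0) (x, y) : ℤ)^2 + (y - x)^2 - 2*(y - x) := by
  obtain ⟨l, hl1, hl2, hl3⟩ := dpc_spec x y
  have h := (invariant l hl2 x y hl3).2
  rwa [hl1] at h

theorem max_x_on_extreme_lines (r : ℕ) :
    IsGreatest {x : ℤ | dpc (0, 0) (x, x + (r : ℤ)) = r} ((r : ℤ) * ((r : ℤ) - 1) / 2) ∧
    IsGreatest {x : ℤ | dpc (0, 0) (x, x - (r : ℤ)) = r} ((r : ℤ) * ((r : ℤ) + 1) / 2) := by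
  obtain ⟨m, hm | hm⟩ := Nat.even_or_odd' r
  · -- r = 2*m
    subst hm
    have hx1 : ((2*m : ℕ) : ℤ) * (((2*m : ℕ) : ℤ) - 1) / 2 = (m:ℤ)*(2*(m:ℤ)-1) := by
      rw [show ((2*m : ℕ) : ℤ) * (((2*m : ℕ) : ℤ) - 1) = 2 * ((m:ℤ)*(2*(m:ℤ)-1)) by push_cast; ring]
      exact Int.mul_ediv_cancel_left _ (by norm_num)
    have hx2 : ((2*m : ℕ) : ℤ) * (((2*m : ℕ) : ℤ) + 1) / 2 = (m:ℤ)*(2*(m:ℤ)+1) := by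
      rw [show ((2*m : ℕ) : ℤ) * (((2*m : ℕ) : ℤ) + 1) = 2 * ((m:ℤ)*(2*(m:ℤ)+1)) by push_cast; ring]
      exact Int.mul_ediv_cancel_left _ (by norm_num)
    constructor
    · constructor
      · show dpc (0, 0) (_, _) = _
        rw [hx1, show (m:ℤ)*(2*(m:ℤ)-1) + ((2*m:ℕ):ℤ) = (m:ℤ)*(2*(m:ℤ)+1) by push_cast; ring]
        exact dpc_eq_of _ _ _
          (by rw [show (m:ℤ)*(2*(m:ℤ)+1) - (m:ℤ)*(2*(m:ℤ)-1) = ((2*m:ℕ):ℤ) by push_cast; ring,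
                abs_of_nonneg (Int.natCast_nonneg _)])
          (repA m) (repA_length m) (repA_mem m) (repA_fold m)
      · intro x hx
        have hb := dpc_bound x (x + ((2*m:ℕ):ℤ))
        rw [hx] at hb
        rw [show (x + ((2*m:ℕ):ℤ) - x) = ((2*m:ℕ):ℤ) by ring] at hb
        rw [hx1]
        push_cast at hb ⊢
        nlinarith [hb]
    · constructor
      · show dpc (0, 0) (_, _) = _
        rw [hx2, show (m:ℤ)*(2*(m:ℤ)+1) - ((2*m:ℕ):ℤ) = (m:ℤ)*(2*(m:ℤ)-1) by push_cast; ring]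
        exact dpc_eq_of _ _ _
          (by rw [show (m:ℤ)*(2*(m:ℤ)-1) - (m:ℤ)*(2*(m:ℤ)+1) = -((2*m:ℕ):ℤ) by push_cast; ring,
                abs_neg, abs_of_nonneg (Int.natCast_nonneg _)])
          (repB m) (repB_length m) (repB_mem m) (repB_fold m)
      · intro x hx
        have hb := dpc_bound x (x - ((2*m:ℕ):ℤ))
        rw [hx] at hb
        rw [show (x - ((2*m:ℕ):ℤ) - x) = -((2*m:ℕ):ℤ) by ring] at hb
        rw [hx2]
        push_cast at hb ⊢
        nlinarith [hb]
  · -- r = 2*m + 1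
    subst hm
    have hx1 : ((2*m+1 : ℕ) : ℤ) * (((2*m+1 : ℕ) : ℤ) - 1) / 2 = (m:ℤ)*(2*(m:ℤ)+1) := by
      rw [show ((2*m+1 : ℕ) : ℤ) * (((2*m+1 : ℕ) : ℤ) - 1) = 2 * ((m:ℤ)*(2*(m:ℤ)+1)) by push_cast; ring]
      exact Int.mul_ediv_cancel_left _ (by norm_num)
    have hx2 : ((2*m+1 : ℕ) : ℤ) * (((2*m+1 : ℕ) : ℤ) + 1) / 2 = ((m:ℤ)+1)*(2*(m:ℤ)+1) := by
      rw [show ((2*m+1 : ℕ) : ℤ) * (((2*m+1 : ℕ) : ℤ) + 1) = 2 * (((m:ℤ)+1)*(2*(m:ℤ)+1)) by push_cast; ring]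
      exact Int.mul_ediv_cancel_left _ (by norm_num)
    constructor
    · constructor
      · show dpc (0, 0) (_, _) = _
        rw [hx1, show (m:ℤ)*(2*(m:ℤ)+1) + ((2*m+1:ℕ):ℤ) = ((m:ℤ)+1)*(2*(m:ℤ)+1) by push_cast; ring]
        refine dpc_eq_of _ _ _
          (by rw [show ((m:ℤ)+1)*(2*(m:ℤ)+1) - (m:ℤ)*(2*(m:ℤ)+1) = ((2*m+1:ℕ):ℤ) by push_cast; ring,
                abs_of_nonneg (Int.natCast_nonneg _)])
          (Lpp :: repB m) (by rw [List.length_cons, repB_length]) ?_ ?_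
        · intro f hf
          simp only [List.mem_cons] at hf
          rcases hf with rfl | h
          · simp [ops]
          · exact repB_mem m f h
        · show Lpp ((repB m).foldr (fun f p => f p) (0, 0)) = _
          rw [repB_fold]
          show ((m:ℤ)*(2*(m:ℤ)+1), 2*((m:ℤ)*(2*(m:ℤ)+1)) - (m:ℤ)*(2*(m:ℤ)-1) + 1) = _
          rw [show 2*((m:ℤ)*(2*(m:ℤ)+1)) - (m:ℤ)*(2*(m:ℤ)-1) + 1 = ((m:ℤ)+1)*(2*(m:ℤ)+1) by ring]
      · intro x hx
        have hb := dpc_bound x (x + ((2*m+1:ℕ):ℤ))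
        rw [hx] at hb
        rw [show (x + ((2*m+1:ℕ):ℤ) - x) = ((2*m+1:ℕ):ℤ) by ring] at hb
        rw [hx1]
        push_cast at hb ⊢
        nlinarith [hb]
    · constructor
      · show dpc (0, 0) (_, _) = _
        rw [hx2, show ((m:ℤ)+1)*(2*(m:ℤ)+1) - ((2*m+1:ℕ):ℤ) = (m:ℤ)*(2*(m:ℤ)+1) by push_cast; ring]
        refine dpc_eq_of _ _ _
          (by rw [show (m:ℤ)*(2*(m:ℤ)+1) - ((m:ℤ)+1)*(2*(m:ℤ)+1) = -((2*m+1:ℕ):ℤ) by push_cast; ring,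
                abs_neg, abs_of_nonneg (Int.natCast_nonneg _)])
          (Lp :: repA m) (by rw [List.length_cons, repA_length]) ?_ ?_
        · intro f hf
          simp only [List.mem_cons] at hf
          rcases hf with rfl | h
          · simp [ops]
          · exact repA_mem m f h
        · show Lp ((repA m).foldr (fun f p => f p) (0, 0)) = _
          rw [repA_fold]
          show (-((m:ℤ)*(2*(m:ℤ)-1)) + 2*((m:ℤ)*(2*(m:ℤ)+1)) + 1, (m:ℤ)*(2*(m:ℤ)+1)) = _
          rw [show -((m:ℤ)*(2*(m:ℤ)-1)) + 2*((m:ℤ)*(2*(m:ℤ)+1)) + 1 = ((m:ℤ)+1)*(2*(m:ℤ)+1) by ring]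
      · intro x hx
        have hb := dpc_bound x (x - ((2*m+1:ℕ):ℤ))
        rw [hx] at hb
        rw [show (x - ((2*m+1:ℕ):ℤ) - x) = -((2*m+1:ℕ):ℤ) by ring] at hb
        rw [hx2]
        push_cast at hb ⊢
        nlinarith [hb]
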